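/- Let τ be a renewal process whose gap distribution satisfies a large deviation principle: J̄(t) := lim_n −(1/n) log P(τ_n ≤ (μ − t)n) exists for t ∈ (0, μ), where μ = E[τ_1] < ∞, and J̄(t) = o(t) as t ↓ 0. Let σ be an independent renewal process with E[σ_1] ≥ μ. Then for every ε > 0 there exists m_0 such that for all m ≥ m_0, liminf_{L→∞} (1/L) E_σ[log P_τ(τ_{mL} ≤ σ_{mL})] ≥ −ε. -/

import Mathlib

open MeasureTheory ProbabilityTheory Filter

/-- `X` is an i.i.d. sequence of measurable random variables. -/
def IIDGaps {Ω : Type*} [MeasurableSpace Ω] (X : ℕ → Ω → ℕ) (μ : Measure Ω) : Prop :=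
  (∀ i, Measurable (X i)) ∧
  iIndepFun (m := fun _ : ℕ => (inferInstance : MeasurableSpace ℕ)) X μ ∧
  (∀ i, Measure.map (X i) μ = Measure.map (X 0) μ)

/-- **Cost of squeezing `τ` below `σ` is negligible (finite-mean case).**
Let `τ` have i.i.d. gaps `X ≥ 1` with finite mean `μ₀ = E[τ₁]`, satisfying a large
deviation principle `J̄(t) = lim_n -(1/n) log P(τ_n ≤ (μ₀ - t)n)` for `t ∈ (0, μ₀)`,
with `J̄(t) = o(t)` as `t ↓ 0`.  Let `σ` have i.i.d. gaps `Y` with `E[σ₁] ≥ μ₀`.  Then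
for every `ε > 0` there is `m₀` such that for all `m ≥ m₀`,
`liminf_{L→∞} (1/L) E_σ[log P_τ(τ_{mL} ≤ σ_{mL})] ≥ -ε`. -/
theorem stmt14 {Ω Ω' : Type*} [MeasurableSpace Ω] [MeasurableSpace Ω']
    (μτ : Measure Ω) [IsProbabilityMeasure μτ]
    (μσ : Measure Ω') [IsProbabilityMeasure μσ]
    (X : ℕ → Ω → ℕ) (hX : IIDGaps X μτ) (hXpos : ∀ i ω, 1 ≤ X i ω)
    (Y : ℕ → Ω' → ℕ) (hY : IIDGaps Y μσ)
    (hXint : Integrable (fun ω => (X 0 ω : ℝ)) μτ)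
    (hYint : Integrable (fun ω => (Y 0 ω : ℝ)) μσ)
    (μ₀ : ℝ) (hμ₀ : μ₀ = ∫ ω, (X 0 ω : ℝ) ∂μτ)
    (hmean : μ₀ ≤ ∫ ω, (Y 0 ω : ℝ) ∂μσ)
    (J : ℝ → ℝ)
    (hJ : ∀ t : ℝ, t ∈ Set.Ioo 0 μ₀ →
      Tendsto (fun n : ℕ => -(1 / (n : ℝ)) *
        Real.log ((μτ {ω | ((∑ i ∈ Finset.range n, X i ω : ℕ) : ℝ)
          ≤ (μ₀ - t) * n}).toReal)) atTop (nhds (J t)))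
    (hJo : Tendsto (fun t => J t / t) (nhdsWithin 0 (Set.Ioi 0)) (nhds 0)) :
    ∀ ε > (0 : ℝ), ∃ m₀ : ℕ, ∀ m : ℕ, m₀ ≤ m →
      -ε ≤ liminf (fun L : ℕ => (L : ℝ)⁻¹ *
        ∫ ω', Real.log ((μτ {ω | (∑ i ∈ Finset.range (m * L), X i ω)
          ≤ (∑ i ∈ Finset.range (m * L), Y i ω')}).toReal) ∂μσ) atTop := by
  obtain ⟨hXm, hXi, hXd⟩ := hX
  obtain ⟨hYm, hYi, hYd⟩ := hY
  intro ε hε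
  -- identical distribution of singletons
  have hXsing : ∀ i k, μτ (X i ⁻¹' {k}) = μτ (X 0 ⁻¹' {k}) := by
    intro i k
    rw [← Measure.map_apply (hXm i) (measurableSet_singleton k), hXd i,
      Measure.map_apply (hXm 0) (measurableSet_singleton k)]
  -- existence of an atom
  have hex : ∃ k : ℕ, μτ (X 0 ⁻¹' {k}) ≠ 0 := by
    by_contra hcon
    push_neg at hcon
    have huniv : (Set.univ : Set Ω) = ⋃ k : ℕ, X 0 ⁻¹' {k} := by ext ω; simp
    have h0 : μτ Set.univ = 0 := by rw [huniv]; exact measure_iUnion_null hcon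
    simp [measure_univ] at h0
  set d := Nat.find hex with hd_def
  have hdatom : μτ (X 0 ⁻¹' {d}) ≠ 0 := Nat.find_spec hex
  have hdmin : ∀ k, k < d → μτ (X 0 ⁻¹' {k}) = 0 := fun k hk => by
    simpa using Nat.find_min hex hk
  have hd1 : 1 ≤ d := by
    by_contra h
    have hd0 : d = 0 := by omega
    apply hdatom
    have hemp : X 0 ⁻¹' {(0 : ℕ)} = (∅ : Set Ω) := by
      ext ω
      simp only [Set.mem_preimage, Set.mem_singleton_iff, Set.mem_empty_iff_false, iff_false]
      have := hXpos 0 ω; omega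
    rw [hd0, hemp]; simp
  set p : ℝ := (μτ (X 0 ⁻¹' {d})).toReal with hp_def
  have hp0 : 0 < p := ENNReal.toReal_pos hdatom (measure_ne_top _ _)
  have hp1 : p ≤ 1 := by
    have := ENNReal.toReal_mono (by simp) (prob_le_one (μ := μτ) (s := X 0 ⁻¹' {d}))
    simpa using this
  have hlogp : Real.log p ≤ 0 := Real.log_nonpos hp0.le hp1
  -- a.e. lower bound on gaps
  have haeX : ∀ i, ∀ᵐ ω ∂μτ, d ≤ X i ω := by
    intro i
    have hnull : μτ {ω | X i ω < d} = 0 := by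
      have hset : {ω | X i ω < d} = ⋃ k : Fin d, X i ⁻¹' {(k : ℕ)} := by
        ext ω
        simp only [Set.mem_setOf_eq, Set.mem_iUnion, Set.mem_preimage, Set.mem_singleton_iff]
        constructor
        · intro h; exact ⟨⟨X i ω, h⟩, rfl⟩
        · rintro ⟨k, hk⟩; rw [hk]; exact k.2
      rw [hset]
      refine measure_iUnion_null fun k => ?_
      rw [hXsing i]
      exact hdmin k k.2
    rw [ae_iff]
    simpa only [not_le] using hnull
  have haeSum : ∀ n : ℕ, ∀ᵐ ω ∂μτ, d * n ≤ ∑ i ∈ Finset.range n, X i ω := by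
    intro n
    filter_upwards [ae_all_iff.mpr haeX] with ω hω
    calc d * n = ∑ _i ∈ Finset.range n, d := by simp [Finset.sum_const, mul_comm]
    _ ≤ ∑ i ∈ Finset.range n, X i ω := Finset.sum_le_sum fun i _ => hω i
  -- lower bound via the atom
  have hEpow : ∀ n : ℕ, μτ (⋂ i ∈ Finset.range n, X i ⁻¹' {d}) = (μτ (X 0 ⁻¹' {d})) ^ n := by
    intro n
    rw [hXi.measure_inter_preimage_eq_mul (Finset.range n) (sets := fun _ => {d})
      (fun i _ => measurableSet_singleton d)]
    rw [Finset.prod_congr rfl (fun i _ => hXsing i d), Finset.prod_const, Finset.card_range]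
  have hPlow : ∀ (n : ℕ) (s : Set Ω), (⋂ i ∈ Finset.range n, X i ⁻¹' {d}) ⊆ s →
      p ^ n ≤ (μτ s).toReal := by
    intro n s hsub
    have h1 : (μτ (X 0 ⁻¹' {d})) ^ n ≤ μτ s := (hEpow n) ▸ measure_mono hsub
    calc p ^ n = ((μτ (X 0 ⁻¹' {d})) ^ n).toReal := by rw [ENNReal.toReal_pow]
    _ ≤ (μτ s).toReal := ENNReal.toReal_mono (measure_ne_top _ _) h1
  have hconst : ∀ (n : ℕ) (ω : Ω), ω ∈ (⋂ i ∈ Finset.range n, X i ⁻¹' {d}) →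
      ∑ i ∈ Finset.range n, X i ω = d * n := by
    intro n ω hω
    simp only [Set.mem_iInter, Set.mem_preimage, Set.mem_singleton_iff] at hω
    rw [Finset.sum_congr rfl hω]
    simp [Finset.sum_const, mul_comm]
  -- pointwise bounds for the integrand
  have hglow : ∀ (n k : ℕ), (n : ℝ) * Real.log p ≤
      Real.log ((μτ {ω | ∑ i ∈ Finset.range n, X i ω ≤ k}).toReal) := by
    intro n k
    by_cases hk : d * n ≤ k
    · have hsub : (⋂ i ∈ Finset.range n, X i ⁻¹' {d}) ⊆
          {ω | ∑ i ∈ Finset.range n, X i ω ≤ k} := by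
        intro ω hω
        simp only [Set.mem_setOf_eq, hconst n ω hω]
        exact hk
      have hle := hPlow n _ hsub
      calc (n : ℝ) * Real.log p = Real.log (p ^ n) := by rw [Real.log_pow]
      _ ≤ _ := Real.log_le_log (by positivity) hle
    · have hnull : μτ {ω | ∑ i ∈ Finset.range n, X i ω ≤ k} = 0 := by
        refine measure_mono_null ?_ (ae_iff.mp (haeSum n))
        intro ω hω
        simp only [Set.mem_setOf_eq] at *
        omega
      rw [hnull]
      simp only [ENNReal.toReal_zero, Real.log_zero]
      exact mul_nonpos_of_nonneg_of_nonpos (Nat.cast_nonneg n) hlogp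
  have hgup : ∀ s : Set Ω, Real.log ((μτ s).toReal) ≤ 0 := fun s =>
    Real.log_nonpos ENNReal.toReal_nonneg
      (by simpa using ENNReal.toReal_mono (by simp) (prob_le_one (μ := μτ) (s := s)))
  -- measurability and integrability of the integrand
  have hYsum_meas : ∀ n : ℕ, Measurable (fun ω' => ∑ i ∈ Finset.range n, Y i ω') :=
    fun n => Finset.measurable_sum _ (fun i _ => hYm i)
  have hg_meas : ∀ n : ℕ, Measurable (fun ω' =>
      Real.log ((μτ {ω | ∑ i ∈ Finset.range n, X i ω ≤ ∑ i ∈ Finset.range n, Y i ω'}).toReal)) :=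
    fun n => (measurable_from_top
      (f := fun k : ℕ => Real.log ((μτ {ω | ∑ i ∈ Finset.range n, X i ω ≤ k}).toReal))).comp
      (hYsum_meas n)
  have hg_int : ∀ n : ℕ, Integrable (fun ω' =>
      Real.log ((μτ {ω | ∑ i ∈ Finset.range n, X i ω ≤ ∑ i ∈ Finset.range n, Y i ω'}).toReal))
      μσ := by
    intro n
    refine (integrable_const ((n : ℝ) * (-Real.log p))).mono'
      (hg_meas n).aestronglyMeasurable (ae_of_all _ fun ω' => ?_)
    rw [Real.norm_eq_abs, abs_le]
    constructor
    · have := hglow n (∑ i ∈ Finset.range n, Y i ω')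
      nlinarith
    · have := hgup {ω | ∑ i ∈ Finset.range n, X i ω ≤ ∑ i ∈ Finset.range n, Y i ω'}
      nlinarith [Nat.cast_nonneg (α := ℝ) n]
  -- d ≤ μ₀
  have hdle : (d : ℝ) ≤ μ₀ := by
    rw [hμ₀]
    calc (d : ℝ) = ∫ _ω, (d : ℝ) ∂μτ := by simp
    _ ≤ ∫ ω, (X 0 ω : ℝ) ∂μτ := by
      refine integral_mono_ae (integrable_const _) hXint ?_
      filter_upwards [haeX 0] with ω hω
      show (d : ℝ) ≤ (X 0 ω : ℝ)
      exact_mod_cast hω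
  by_cases hcase : (d : ℝ) < μ₀
  · -- main case
    have hd0R : (1 : ℝ) ≤ (d : ℝ) := by exact_mod_cast hd1
    have hμ₀pos : (0 : ℝ) < μ₀ := by linarith
    have hsubpos : (0 : ℝ) < μ₀ - d := by linarith
    have hts : Tendsto (fun m : ℕ => (μ₀ - (d : ℝ)) / m) atTop (nhdsWithin 0 (Set.Ioi 0)) := by
      rw [tendsto_nhdsWithin_iff]
      refine ⟨tendsto_const_div_atTop_nhds_zero_nat _, ?_⟩
      filter_upwards [eventually_ge_atTop 1] with m hm
      have : (1 : ℝ) ≤ (m : ℝ) := by exact_mod_cast hm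
      exact div_pos hsubpos (by linarith)
    have hcomp : Tendsto (fun m : ℕ =>
        (μ₀ - (d : ℝ)) * (J ((μ₀ - d) / m) / ((μ₀ - d) / m))) atTop (nhds 0) := by
      have := ((hJo.comp hts).const_mul (μ₀ - (d : ℝ)))
      simpa using this
    have hevm : ∀ᶠ m : ℕ in atTop,
        (μ₀ - (d : ℝ)) * (J ((μ₀ - d) / m) / ((μ₀ - d) / m)) < ε :=
      hcomp.eventually_lt_const hε
    obtain ⟨m₁, hm₁⟩ := eventually_atTop.mp hevm
    refine ⟨max m₁ 1, fun m hm => ?_⟩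
    have hm1 : 1 ≤ m := le_trans (le_max_right _ _) hm
    have hmR : (1 : ℝ) ≤ (m : ℝ) := by exact_mod_cast hm1
    have hmne : (m : ℝ) ≠ 0 := by linarith
    set t := (μ₀ - (d : ℝ)) / m with ht_def
    have ht0 : 0 < t := div_pos hsubpos (by linarith)
    have htle : t ≤ μ₀ - d := div_le_self hsubpos.le hmR
    have ht : t ∈ Set.Ioo 0 μ₀ := ⟨ht0, by linarith⟩
    have hdt : (d : ℝ) ≤ μ₀ - t := by linarith
    have hJt : (m : ℝ) * J t ≤ ε := by
      have h1 := hm₁ m (le_trans (le_max_left _ _) hm)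
      have h2 : (μ₀ - (d : ℝ)) * (J t / t) = m * J t := by
        rw [ht_def]
        field_simp
      rw [ht_def] at h2 ⊢
      linarith [h2 ▸ h1]
    -- the composed index map
    have hmono : Tendsto (fun L : ℕ => m * L) atTop atTop :=
      tendsto_atTop_mono (fun L => Nat.le_mul_of_pos_left L (by omega)) tendsto_id
    -- convergence of the main term
    have hℓ : Tendsto (fun L : ℕ => (L : ℝ)⁻¹ *
        Real.log ((μτ {ω | ((∑ i ∈ Finset.range (m * L), X i ω : ℕ) : ℝ)
          ≤ (μ₀ - t) * ((m * L : ℕ) : ℝ)}).toReal)) atTop (nhds (-((m : ℝ) * J t))) := by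
      have h3 := ((hJ t ht).comp hmono).const_mul (-(m : ℝ))
      have h4 : (-(m : ℝ)) * J t = -((m : ℝ) * J t) := by ring
      rw [h4] at h3
      refine Tendsto.congr (fun L => ?_) h3
      simp only [Function.comp_apply]
      rcases Nat.eq_zero_or_pos L with hL | hL
      · subst hL; simp
      · have hLne : (L : ℝ) ≠ 0 := Nat.cast_ne_zero.mpr (by omega)
        rw [← mul_assoc]
        congr 1
        rw [Nat.cast_mul]
        field_simp
    -- the good event
    have hYsumR_meas : ∀ n : ℕ,
        Measurable (fun ω' => ((∑ i ∈ Finset.range n, Y i ω' : ℕ) : ℝ)) :=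
      fun n => measurable_from_top.comp (hYsum_meas n)
    have hAmeas : ∀ L : ℕ, MeasurableSet {ω' | (μ₀ - t) * ((m * L : ℕ) : ℝ)
        ≤ ((∑ i ∈ Finset.range (m * L), Y i ω' : ℕ) : ℝ)} :=
      fun L => measurableSet_le measurable_const (hYsumR_meas (m * L))
    -- strong law of large numbers for σ
    have hident : ∀ i, IdentDistrib (fun ω' => (Y i ω' : ℝ)) (fun ω' => (Y 0 ω' : ℝ)) μσ μσ := by
      intro i
      exact (⟨(hYm i).aemeasurable, (hYm 0).aemeasurable, hYd i⟩ :
        IdentDistrib (Y i) (Y 0) μσ μσ).comp measurable_from_top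
    have hpair : Pairwise (Function.onFun (IndepFun · · μσ) (fun i (ω' : Ω') => (Y i ω' : ℝ))) := by
      intro i j hij
      exact (hYi.comp (fun _ => ((↑·) : ℕ → ℝ)) (fun _ => measurable_from_top)).indepFun hij
    have hslln := strong_law_ae (μ := μσ) (fun i (ω' : Ω') => (Y i ω' : ℝ)) hYint hpair hident
    have hAev : ∀ᵐ ω' ∂μσ, ∀ᶠ L : ℕ in atTop,
        ω' ∈ {ω' | (μ₀ - t) * ((m * L : ℕ) : ℝ)
          ≤ ((∑ i ∈ Finset.range (m * L), Y i ω' : ℕ) : ℝ)} := by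
      filter_upwards [hslln] with ω' hω'
      have h5 := (hω'.comp hmono).eventually_const_lt
        (show μ₀ - t < ∫ x, (Y 0 x : ℝ) ∂μσ by linarith)
      filter_upwards [h5, eventually_ge_atTop 1] with L hL hL1
      have hmL : 0 < m * L := Nat.mul_pos (by omega) (by omega)
      have hcast : (0 : ℝ) < ((m * L : ℕ) : ℝ) := by exact_mod_cast hmL
      simp only [Function.comp_apply, smul_eq_mul] at hL
      have hsum : (∑ i ∈ Finset.range (m * L), (Y i ω' : ℝ))
          = ((∑ i ∈ Finset.range (m * L), Y i ω' : ℕ) : ℝ) := by push_cast; rfl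
      rw [hsum] at hL
      show (μ₀ - t) * ((m * L : ℕ) : ℝ) ≤ ((∑ i ∈ Finset.range (m * L), Y i ω' : ℕ) : ℝ)
      have := (lt_div_iff₀ hcast).mp (by rwa [inv_mul_eq_div] at hL)
      linarith
    -- the measure of the bad event tends to 0
    have hto0 : Tendsto (fun L : ℕ => (μσ ({ω' | (μ₀ - t) * ((m * L : ℕ) : ℝ)
        ≤ ((∑ i ∈ Finset.range (m * L), Y i ω' : ℕ) : ℝ)}ᶜ)).toReal) atTop (nhds 0) := by
      have hdct := tendsto_integral_of_dominated_convergence (μ := μσ)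
        (F := fun L : ℕ => Set.indicator ({ω' | (μ₀ - t) * ((m * L : ℕ) : ℝ)
          ≤ ((∑ i ∈ Finset.range (m * L), Y i ω' : ℕ) : ℝ)}ᶜ) (fun _ => (1 : ℝ)))
        (f := fun _ => (0 : ℝ)) (bound := fun _ => (1 : ℝ))
        (fun L => (measurable_const.indicator (hAmeas L).compl).aestronglyMeasurable)
        (integrable_const 1)
        (fun L => ae_of_all _ fun ω' => by
          rw [Real.norm_eq_abs]
          by_cases hω' : ω' ∈ ({ω' | (μ₀ - t) * ((m * L : ℕ) : ℝ)
              ≤ ((∑ i ∈ Finset.range (m * L), Y i ω' : ℕ) : ℝ)}ᶜ)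
          · simp only [Set.indicator_of_mem hω']; norm_num
          · simp only [Set.indicator_of_notMem hω']; norm_num)
        (by
          filter_upwards [hAev] with ω' hω'
          have hev0 : (fun _ : ℕ => (0 : ℝ)) =ᶠ[atTop] fun L : ℕ =>
              Set.indicator ({ω' | (μ₀ - t) * ((m * L : ℕ) : ℝ)
                ≤ ((∑ i ∈ Finset.range (m * L), Y i ω' : ℕ) : ℝ)}ᶜ) (fun _ => (1 : ℝ)) ω' := by
            filter_upwards [hω'] with L hL
            exact (Set.indicator_of_notMem (Set.notMem_compl_iff.mpr hL) (fun _ => (1 : ℝ))).symm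
          exact tendsto_const_nhds.congr' hev0)
      simp only [integral_zero] at hdct
      refine Tendsto.congr (fun L => ?_) hdct
      rw [integral_indicator_const (1 : ℝ) (hAmeas L).compl]
      simp [measureReal_def]
    -- assemble
    set f := fun L : ℕ => (L : ℝ)⁻¹ *
        ∫ ω', Real.log ((μτ {ω | (∑ i ∈ Finset.range (m * L), X i ω)
          ≤ (∑ i ∈ Finset.range (m * L), Y i ω')}).toReal) ∂μσ with hf_def
    set G := fun L : ℕ => (L : ℝ)⁻¹ *
        Real.log ((μτ {ω | ((∑ i ∈ Finset.range (m * L), X i ω : ℕ) : ℝ)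
          ≤ (μ₀ - t) * ((m * L : ℕ) : ℝ)}).toReal)
        + (μσ ({ω' | (μ₀ - t) * ((m * L : ℕ) : ℝ)
          ≤ ((∑ i ∈ Finset.range (m * L), Y i ω' : ℕ) : ℝ)}ᶜ)).toReal
          * ((m : ℝ) * Real.log p) with hG_def
    have hGtend : Tendsto G atTop (nhds (-((m : ℝ) * J t))) := by
      have h := hℓ.add (hto0.mul_const ((m : ℝ) * Real.log p))
      have he : -((m : ℝ) * J t) + 0 * ((m : ℝ) * Real.log p) = -((m : ℝ) * J t) := by ring
      rw [he] at h
      exact h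
    have hfG : ∀ᶠ L in atTop, G L ≤ f L := by
      filter_upwards [eventually_ge_atTop 1] with L hL
      have hLR : (1 : ℝ) ≤ (L : ℝ) := by exact_mod_cast hL
      have hLne : (L : ℝ) ≠ 0 := by linarith
      simp only [hG_def, hf_def]
      set A := {ω' | (μ₀ - t) * ((m * L : ℕ) : ℝ)
        ≤ ((∑ i ∈ Finset.range (m * L), Y i ω' : ℕ) : ℝ)} with hA_def
      set ℓL := Real.log ((μτ {ω | ((∑ i ∈ Finset.range (m * L), X i ω : ℕ) : ℝ)
        ≤ (μ₀ - t) * ((m * L : ℕ) : ℝ)}).toReal) with hℓL_def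
      set cL := ((m * L : ℕ) : ℝ) * Real.log p with hcL_def
      have hℓ0 : ℓL ≤ 0 := hgup _
      have hc0 : cL ≤ 0 :=
        mul_nonpos_of_nonneg_of_nonpos (Nat.cast_nonneg _) hlogp
      -- positivity of the reference probability
      have hP1pos : 0 < (μτ {ω | ((∑ i ∈ Finset.range (m * L), X i ω : ℕ) : ℝ)
          ≤ (μ₀ - t) * ((m * L : ℕ) : ℝ)}).toReal := by
        refine lt_of_lt_of_le (pow_pos hp0 (m * L)) (hPlow (m * L) _ ?_)
        intro ω hω
        simp only [Set.mem_setOf_eq, hconst (m * L) ω hω]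
        push_cast
        calc ((d : ℝ) * (m * L)) ≤ (μ₀ - t) * (m * L) := by
              have : (0 : ℝ) ≤ (m : ℝ) * (L : ℝ) := by positivity
              nlinarith
        _ = (μ₀ - t) * ((m : ℝ) * (L : ℝ)) := by ring
      -- the dominating function
      have hind1 : Integrable (A.indicator (fun _ => ℓL)) μσ :=
        (integrable_const ℓL).indicator (hAmeas L)
      have hind2 : Integrable (Aᶜ.indicator (fun _ => cL)) μσ :=
        (integrable_const cL).indicator (hAmeas L).compl
      have hhg : ∀ ω', (A.indicator (fun _ => ℓL) + Aᶜ.indicator (fun _ => cL)) ω'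
          ≤ Real.log ((μτ {ω | (∑ i ∈ Finset.range (m * L), X i ω)
            ≤ (∑ i ∈ Finset.range (m * L), Y i ω')}).toReal) := by
        intro ω'
        by_cases hω' : ω' ∈ A
        · have hA2 : ω' ∉ Aᶜ := by simpa using hω'
          simp only [Pi.add_apply, Set.indicator_of_mem hω', Set.indicator_of_notMem hA2,
            add_zero]
          refine Real.log_le_log hP1pos (ENNReal.toReal_mono (measure_ne_top _ _)
            (measure_mono ?_))
          intro ω hω
          simp only [Set.mem_setOf_eq] at hω ⊢
          have hω'2 : (μ₀ - t) * ((m * L : ℕ) : ℝ)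
              ≤ ((∑ i ∈ Finset.range (m * L), Y i ω' : ℕ) : ℝ) := hω'
          exact_mod_cast le_trans hω hω'2
        · have hA2 : ω' ∈ Aᶜ := by simpa using hω'
          simp only [Pi.add_apply, Set.indicator_of_notMem hω', Set.indicator_of_mem hA2,
            zero_add]
          exact hglow (m * L) _
      have hIle : ∫ ω', (A.indicator (fun _ => ℓL) + Aᶜ.indicator (fun _ => cL)) ω' ∂μσ
          ≤ ∫ ω', Real.log ((μτ {ω | (∑ i ∈ Finset.range (m * L), X i ω)
            ≤ (∑ i ∈ Finset.range (m * L), Y i ω')}).toReal) ∂μσ :=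
        integral_mono (hind1.add hind2) (hg_int (m * L)) hhg
      have hIeq : ∫ ω', (A.indicator (fun _ => ℓL) + Aᶜ.indicator (fun _ => cL)) ω' ∂μσ
          = (μσ A).toReal * ℓL + (μσ Aᶜ).toReal * cL := by
        simp only [Pi.add_apply]
        rw [integral_add hind1 hind2, integral_indicator_const ℓL (hAmeas L),
          integral_indicator_const cL (hAmeas L).compl]
        simp only [smul_eq_mul, measureReal_def, hA_def]
      have hμA1 : (μσ A).toReal ≤ 1 := by
        have := ENNReal.toReal_mono (by simp) (prob_le_one (μ := μσ) (s := A))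
        simpa using this
      have hμA0 : 0 ≤ (μσ A).toReal := ENNReal.toReal_nonneg
      have hstep1 : ℓL + (μσ Aᶜ).toReal * cL
          ≤ ∫ ω', Real.log ((μτ {ω | (∑ i ∈ Finset.range (m * L), X i ω)
            ≤ (∑ i ∈ Finset.range (m * L), Y i ω')}).toReal) ∂μσ := by
        rw [hIeq] at hIle
        nlinarith
      have hkey : (L : ℝ)⁻¹ * cL = (m : ℝ) * Real.log p := by
        rw [hcL_def, Nat.cast_mul]
        field_simp
      calc (L : ℝ)⁻¹ * ℓL + (μσ Aᶜ).toReal * ((m : ℝ) * Real.log p)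
          = (L : ℝ)⁻¹ * (ℓL + (μσ Aᶜ).toReal * cL) := by rw [← hkey]; ring
        _ ≤ _ := mul_le_mul_of_nonneg_left hstep1 (by positivity)
    have hfle : ∀ L, f L ≤ 0 := fun L =>
      mul_nonpos_of_nonneg_of_nonpos (by positivity) (integral_nonpos fun ω' => hgup _)
    calc -ε ≤ -((m : ℝ) * J t) := by linarith
    _ = liminf G atTop := hGtend.liminf_eq.symm
    _ ≤ liminf f atTop := by
      refine liminf_le_liminf hfG hGtend.isBoundedUnder_ge ?_
      exact IsBoundedUnder.isCoboundedUnder_ge (isBoundedUnder_of ⟨0, hfle⟩)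
  · -- degenerate case : the gaps are a.s. constant
    push_neg at hcase
    have hXeq : ∀ᵐ ω ∂μτ, (X 0 ω : ℝ) = d := by
      have hnn : 0 ≤ᵐ[μτ] fun ω => (X 0 ω : ℝ) - d := by
        filter_upwards [haeX 0] with ω hω
        have : (d : ℝ) ≤ X 0 ω := by exact_mod_cast hω
        simp only [Pi.zero_apply]
        linarith
      have hint : Integrable (fun ω => (X 0 ω : ℝ) - d) μτ := hXint.sub (integrable_const _)
      have hzero : ∫ ω, ((X 0 ω : ℝ) - d) ∂μτ = 0 := by
        rw [integral_sub hXint (integrable_const _), integral_const]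
        simp only [measure_univ, probReal_univ, ENNReal.toReal_one, smul_eq_mul, one_mul]
        have : ∫ ω, (X 0 ω : ℝ) ∂μτ = μ₀ := hμ₀.symm
        linarith
      have h0 := (integral_eq_zero_iff_of_nonneg_ae hnn hint).mp hzero
      filter_upwards [h0] with ω hω
      have : (X 0 ω : ℝ) - d = 0 := hω
      linarith
    have haeAll : ∀ᵐ ω ∂μτ, ∀ i, X i ω = d := by
      rw [ae_all_iff]
      intro i
      have h1 : μτ (X i ⁻¹' {d}) = 1 := by
        rw [hXsing i, ← measure_univ (μ := μτ)]
        refine measure_congr (Filter.eventuallyEq_univ.mpr ?_)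
        filter_upwards [hXeq] with ω hω
        have : X 0 ω = d := by exact_mod_cast hω
        simpa [Set.mem_preimage] using this
      have h2 : μτ ((X i ⁻¹' {d})ᶜ) = 0 := by
        rw [measure_compl (hXm i (measurableSet_singleton d)) (measure_ne_top _ _), h1]
        simp
      rw [ae_iff]
      have hseteq : {ω | ¬X i ω = d} = (X i ⁻¹' {d})ᶜ := by ext ω; simp
      rw [hseteq]
      exact h2
    refine ⟨0, fun m _ => ?_⟩
    have hfun : (fun L : ℕ => (L : ℝ)⁻¹ *
        ∫ ω', Real.log ((μτ {ω | (∑ i ∈ Finset.range (m * L), X i ω)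
          ≤ (∑ i ∈ Finset.range (m * L), Y i ω')}).toReal) ∂μσ) = fun _ => (0 : ℝ) := by
      funext L
      have hcore : ∀ k : ℕ, Real.log ((μτ {ω | (∑ i ∈ Finset.range (m * L), X i ω)
          ≤ k}).toReal) = 0 := by
        intro k
        by_cases hk : d * (m * L) ≤ k
        · have h1 : μτ {ω | ∑ i ∈ Finset.range (m * L), X i ω ≤ k} = 1 := by
            rw [← measure_univ (μ := μτ)]
            refine measure_congr (Filter.eventuallyEq_univ.mpr ?_)
            filter_upwards [haeAll] with ω hω
            show ∑ i ∈ Finset.range (m * L), X i ω ≤ k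
            have hsum : ∑ i ∈ Finset.range (m * L), X i ω = d * (m * L) := by
              rw [Finset.sum_congr rfl fun i _ => hω i]
              simp [Finset.sum_const, mul_comm]
            omega
          rw [h1]; simp
        · have h1 : μτ {ω | ∑ i ∈ Finset.range (m * L), X i ω ≤ k} = 0 := by
            refine measure_mono_null ?_ (ae_iff.mp (haeSum (m * L)))
            intro ω hω
            simp only [Set.mem_setOf_eq] at *
            omega
          rw [h1]; simp
      have hzero : (fun ω' => Real.log ((μτ {ω | (∑ i ∈ Finset.range (m * L), X i ω)
          ≤ (∑ i ∈ Finset.range (m * L), Y i ω')}).toReal)) = fun _ => (0 : ℝ) :=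
        funext fun ω' => hcore _
      rw [hzero, integral_zero, mul_zero]
    rw [hfun, liminf_const]
    linarith
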